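/- Soundness of the progress-based decomposition (Lemma 1): Let φ be an STL formula in the disjunction-free positive normal form fragment, and let (P_φ, T_φ, Λ_φ) be its recursive progress-based decomposition, with feasible assignment set F_φ consisting of all assignments of nonnegative integers to the variables in Λ_φ that satisfy every interval constraint in T_φ. Then for every signal s : ℕ → ℝ^n, s ⊨ φ (i.e., s_0 ⊨ φ) if and only if there exists an assignment λ⃗ ∈ F_φ such that every progress condition in P_φ, with its symbolic endpoints evaluated under λ⃗, holds on s. In particular, when Λ_φ = ∅, s ⊨ φ if and only if every progress condition in P_φ holds on s. -/

import Mathlib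

/-- Until-prefix formulas of the fragment: built only from atomic predicates,
conjunction, and bounded always (no `F` or `U`). Interval bounds satisfy `a ≤ b`. -/
inductive PrefixSTL (n : ℕ) : Type where
  | atom (h : (Fin n → ℝ) → ℝ)
  | conj (φ₁ φ₂ : PrefixSTL n)
  | always (a b : ℕ) (hab : a ≤ b) (φ : PrefixSTL n)

/-- STL formulas of the disjunction-free positive normal form fragment over `ℝ^n`:
atomic predicates, conjunction, bounded eventually, bounded always, and bounded until
whose prefix contains no `F` or `U`. Interval bounds satisfy `a ≤ b`. -/
inductive STL (n : ℕ) : Type where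
  | atom (h : (Fin n → ℝ) → ℝ)
  | conj (φ₁ φ₂ : STL n)
  | ev (a b : ℕ) (hab : a ≤ b) (φ : STL n)
  | always (a b : ℕ) (hab : a ≤ b) (φ : STL n)
  | untl (ψ : PrefixSTL n) (a b : ℕ) (hab : a ≤ b) (φ : STL n)

/-- Boolean semantics of prefix formulas: `PrefixSTL.Sat s ψ t` means `s_t ⊨ ψ`. -/
def PrefixSTL.Sat {n : ℕ} (s : ℕ → Fin n → ℝ) : PrefixSTL n → ℕ → Prop
  | .atom h, t => 0 ≤ h (s t)
  | .conj φ₁ φ₂, t => PrefixSTL.Sat s φ₁ t ∧ PrefixSTL.Sat s φ₂ t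
  | .always a b _ φ, t => ∀ t', t + a ≤ t' → t' ≤ t + b → PrefixSTL.Sat s φ t'

/-- Boolean semantics: `STL.Sat s φ t` means `s_t ⊨ φ`. -/
def STL.Sat {n : ℕ} (s : ℕ → Fin n → ℝ) : STL n → ℕ → Prop
  | .atom h, t => 0 ≤ h (s t)
  | .conj φ₁ φ₂, t => STL.Sat s φ₁ t ∧ STL.Sat s φ₂ t
  | .ev a b _ φ, t => ∃ t', t + a ≤ t' ∧ t' ≤ t + b ∧ STL.Sat s φ t'
  | .always a b _ φ, t => ∀ t', t + a ≤ t' → t' ≤ t + b → STL.Sat s φ t'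
  | .untl ψ a b _ φ, t => ∃ t', t + a ≤ t' ∧ t' ≤ t + b ∧ STL.Sat s φ t' ∧
      ∀ t'', t ≤ t'' → t'' ≤ t' → PrefixSTL.Sat s ψ t''

/-- A symbolic progress condition over `nv` time variables: a kind flag
(`reach = true` for reachability `R`, `reach = false` for invariance `I`),
symbolic interval endpoints evaluated on assignments of the time variables,
and the evaluation function of the atomic predicate. -/
structure ProgCond (n nv : ℕ) : Type where
  reach : Bool
  lo : (Fin nv → ℕ) → ℕ
  hi : (Fin nv → ℕ) → ℕ
  pred : (Fin n → ℝ) → ℝ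

/-- Satisfaction of a progress condition on the signal `s` under the
time-variable assignment `lam`. -/
def ProgCond.Holds {n nv : ℕ} (c : ProgCond n nv) (lam : Fin nv → ℕ)
    (s : ℕ → Fin n → ℝ) : Prop :=
  if c.reach then ∃ t, c.lo lam ≤ t ∧ t ≤ c.hi lam ∧ 0 ≤ c.pred (s t)
  else ∀ t, c.lo lam ≤ t → t ≤ c.hi lam → 0 ≤ c.pred (s t)

/-- Reindex the time variables of a progress condition. -/
def ProgCond.comap {n nv nv' : ℕ} (c : ProgCond n nv)
    (f : (Fin nv' → ℕ) → Fin nv → ℕ) : ProgCond n nv' :=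
  ⟨c.reach, fun lam => c.lo (f lam), fun lam => c.hi (f lam), c.pred⟩

/-- Shift both endpoints of a progress condition by `k`. -/
def ProgCond.shiftBy {n nv : ℕ} (c : ProgCond n nv) (k : (Fin nv → ℕ) → ℕ) :
    ProgCond n nv :=
  ⟨c.reach, fun lam => c.lo lam + k lam, fun lam => c.hi lam + k lam, c.pred⟩

/-- A decomposition triple `(ℙ_φ, 𝕋_φ, Λ_φ)`: `nv` time variables, one interval
constraint per variable, and a finite list of symbolic progress conditions. -/
structure Decomp (n : ℕ) : Type where
  nv : ℕ
  constr : Fin nv → ℕ × ℕ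
  conds : List (ProgCond n nv)

/-- Feasible assignments: nonnegative integer assignments of the time variables
satisfying every interval constraint. -/
def Decomp.Feasible {n : ℕ} (D : Decomp n) (lam : Fin D.nv → ℕ) : Prop :=
  ∀ v, (D.constr v).1 ≤ lam v ∧ lam v ≤ (D.constr v).2

/-- Decomposition of an (F/U-free) until-prefix formula into invariance
conditions with constant endpoints `(c, d, h_μ)`. -/
def pdecomp {n : ℕ} : PrefixSTL n → List (ℕ × ℕ × ((Fin n → ℝ) → ℝ))
  | .atom h => [(0, 0, h)]
  | .conj φ₁ φ₂ => pdecomp φ₁ ++ pdecomp φ₂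
  | .always a b _ (.atom h) => [(a, b, h)]
  | .always a b _ φ =>
      (List.range (b + 1 - a)).flatMap fun k =>
        (pdecomp φ).map fun c => (c.1 + (a + k), c.2.1 + (a + k), c.2.2)

/-- The recursive progress-based decomposition `(ℙ_φ, 𝕋_φ, Λ_φ)` of an STL formula. -/
def decomp {n : ℕ} : STL n → Decomp n
  | .atom h => ⟨0, Fin.elim0, [⟨true, fun _ => 0, fun _ => 0, h⟩]⟩
  | .conj φ₁ φ₂ =>
      let D₁ := decomp φ₁
      let D₂ := decomp φ₂
      ⟨D₁.nv + D₂.nv,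
        fun v => Fin.addCases (motive := fun _ => ℕ × ℕ) D₁.constr D₂.constr v,
        (D₁.conds.map fun c => c.comap fun lam i => lam (Fin.castAdd D₂.nv i)) ++
        (D₂.conds.map fun c => c.comap fun lam i => lam (Fin.natAdd D₁.nv i))⟩
  | .ev a b _ φ =>
      let D := decomp φ
      ⟨D.nv + 1,
        Fin.snoc D.constr (a, b),
        D.conds.map fun c =>
          (c.comap fun lam i => lam i.castSucc).shiftBy fun lam => lam (Fin.last D.nv)⟩
  | .always a b _ (.atom h) =>
      ⟨0, Fin.elim0, [⟨false, fun _ => a, fun _ => b, h⟩]⟩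
  | .always a b _ φ =>
      let D := decomp φ
      ⟨(b + 1 - a) * D.nv,
        fun v => D.constr (finProdFinEquiv.symm v).2,
        (List.finRange (b + 1 - a)).flatMap fun k =>
          D.conds.map fun c =>
            (c.comap fun lam i => lam (finProdFinEquiv (k, i))).shiftBy
              fun _ => a + (k : ℕ)⟩
  | .untl ψ a b _ φ =>
      let D := decomp φ
      ⟨D.nv + 1,
        Fin.snoc D.constr (a, b),
        (D.conds.map fun c =>
          (c.comap fun lam i => lam i.castSucc).shiftBy fun lam => lam (Fin.last D.nv)) ++
        ((pdecomp ψ).map fun c =>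
          ⟨false, fun _ => c.1, fun lam => c.2.1 + lam (Fin.last D.nv), c.2.2⟩)⟩
/-! ### Auxiliary development for the soundness proof -/

/-- Time-shifted satisfaction of a progress condition: the interval is shifted by `t`. -/
def ProgCond.HoldsAt {n nv : ℕ} (c : ProgCond n nv) (lam : Fin nv → ℕ)
    (s : ℕ → Fin n → ℝ) (t : ℕ) : Prop :=
  if c.reach then ∃ u, t + c.lo lam ≤ u ∧ u ≤ t + c.hi lam ∧ 0 ≤ c.pred (s u)
  else ∀ u, t + c.lo lam ≤ u → u ≤ t + c.hi lam → 0 ≤ c.pred (s u)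

lemma ProgCond.holdsAt_zero {n nv : ℕ} (c : ProgCond n nv) (lam : Fin nv → ℕ)
    (s : ℕ → Fin n → ℝ) : c.HoldsAt lam s 0 ↔ c.Holds lam s := by
  simp [ProgCond.HoldsAt, ProgCond.Holds]

lemma ProgCond.comap_holdsAt {n nv nv' : ℕ} (c : ProgCond n nv)
    (f : (Fin nv' → ℕ) → Fin nv → ℕ) (lam : Fin nv' → ℕ) (s : ℕ → Fin n → ℝ) (t : ℕ) :
    (c.comap f).HoldsAt lam s t ↔ c.HoldsAt (f lam) s t := Iff.rfl

lemma ProgCond.shiftBy_holdsAt {n nv : ℕ} (c : ProgCond n nv)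
    (k : (Fin nv → ℕ) → ℕ) (lam : Fin nv → ℕ) (s : ℕ → Fin n → ℝ) (t : ℕ) :
    (c.shiftBy k).HoldsAt lam s t ↔ c.HoldsAt lam s (t + k lam) := by
  obtain ⟨r, lo, hi, p⟩ := c
  simp only [ProgCond.HoldsAt, ProgCond.shiftBy]
  rcases Bool.eq_false_or_eq_true r with rfl | rfl <;> simp only [↓reduceIte, Bool.false_eq_true]
  · constructor
    · rintro ⟨u, h1, h2, h3⟩; exact ⟨u, by omega, by omega, h3⟩
    · rintro ⟨u, h1, h2, h3⟩; exact ⟨u, by omega, by omega, h3⟩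
  · constructor
    · intro h u h1 h2; exact h u (by omega) (by omega)
    · intro h u h1 h2; exact h u (by omega) (by omega)

lemma ProgCond.holdsAt_mk_true {n nv : ℕ} (lo hi : (Fin nv → ℕ) → ℕ)
    (p : (Fin n → ℝ) → ℝ) (lam : Fin nv → ℕ) (s : ℕ → Fin n → ℝ) (t : ℕ) :
    (ProgCond.mk true lo hi p).HoldsAt lam s t ↔
      ∃ u, t + lo lam ≤ u ∧ u ≤ t + hi lam ∧ 0 ≤ p (s u) := by
  simp [ProgCond.HoldsAt]

lemma ProgCond.holdsAt_mk_false {n nv : ℕ} (lo hi : (Fin nv → ℕ) → ℕ)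
    (p : (Fin n → ℝ) → ℝ) (lam : Fin nv → ℕ) (s : ℕ → Fin n → ℝ) (t : ℕ) :
    (ProgCond.mk false lo hi p).HoldsAt lam s t ↔
      ∀ u, t + lo lam ≤ u → u ≤ t + hi lam → 0 ≤ p (s u) := by
  simp [ProgCond.HoldsAt]

lemma pdecomp_le {n : ℕ} (ψ : PrefixSTL n) : ∀ c ∈ pdecomp ψ, c.1 ≤ c.2.1 := by
  induction ψ with
  | atom h => simp [pdecomp]
  | conj φ₁ φ₂ ih₁ ih₂ =>
    intro c hc
    rcases List.mem_append.1 hc with hc | hc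
    · exact ih₁ c hc
    · exact ih₂ c hc
  | always a b hab φ ih =>
    cases φ with
    | atom h =>
      intro c hc
      simp only [pdecomp, List.mem_singleton] at hc
      subst hc
      exact hab
    | conj φ₁ φ₂ =>
      intro c hc
      rw [show pdecomp (PrefixSTL.always a b hab (.conj φ₁ φ₂)) =
        (List.range (b + 1 - a)).flatMap (fun k =>
          (pdecomp (PrefixSTL.conj φ₁ φ₂)).map fun c => (c.1 + (a + k), c.2.1 + (a + k), c.2.2)) from rfl] at hc
      simp only [List.mem_flatMap, List.mem_map, List.mem_range] at hc
      obtain ⟨k, -, c', hc', rfl⟩ := hc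
      have := ih c' hc'
      simp; omega
    | always a' b' hab' φ' =>
      intro c hc
      rw [show pdecomp (PrefixSTL.always a b hab (.always a' b' hab' φ')) =
        (List.range (b + 1 - a)).flatMap (fun k =>
          (pdecomp (PrefixSTL.always a' b' hab' φ')).map fun c => (c.1 + (a + k), c.2.1 + (a + k), c.2.2)) from rfl] at hc
      simp only [List.mem_flatMap, List.mem_map, List.mem_range] at hc
      obtain ⟨k, -, c', hc', rfl⟩ := hc
      have := ih c' hc'
      simp; omega

lemma pdecomp_always_aux {n : ℕ} (a b : ℕ) (φ : PrefixSTL n) (s : ℕ → Fin n → ℝ) (t : ℕ)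
    (ih : ∀ t, PrefixSTL.Sat s φ t ↔
      ∀ c ∈ pdecomp φ, ∀ u, t + c.1 ≤ u → u ≤ t + c.2.1 → 0 ≤ c.2.2 (s u)) :
    ((∀ t', t + a ≤ t' → t' ≤ t + b → PrefixSTL.Sat s φ t') ↔
      ∀ c ∈ (List.range (b + 1 - a)).flatMap (fun k =>
          (pdecomp φ).map fun c =>
            ((c.1 + (a + k), c.2.1 + (a + k), c.2.2) : ℕ × ℕ × ((Fin n → ℝ) → ℝ))),
        ∀ u, t + c.1 ≤ u → u ≤ t + c.2.1 → 0 ≤ c.2.2 (s u)) := by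
  constructor
  · intro H c hc
    simp only [List.mem_flatMap, List.mem_map, List.mem_range] at hc
    obtain ⟨k, hk, c', hc', rfl⟩ := hc
    intro u h1 h2
    simp only at h1 h2
    exact (ih (t + (a + k))).mp (H _ (by omega) (by omega)) c' hc' u (by omega) (by omega)
  · intro H t' h1 h2
    rw [ih t']
    intro c hc u hu1 hu2
    have := H (c.1 + (a + (t' - (t + a))), c.2.1 + (a + (t' - (t + a))), c.2.2)
      (List.mem_flatMap.2 ⟨t' - (t + a), List.mem_range.2 (by omega),
        List.mem_map_of_mem hc⟩) u
    simp only at this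
    exact this (by omega) (by omega)

lemma pdecomp_sound {n : ℕ} (ψ : PrefixSTL n) (s : ℕ → Fin n → ℝ) (t : ℕ) :
    PrefixSTL.Sat s ψ t ↔
      ∀ c ∈ pdecomp ψ, ∀ u, t + c.1 ≤ u → u ≤ t + c.2.1 → 0 ≤ c.2.2 (s u) := by
  induction ψ generalizing t with
  | atom h =>
    simp only [PrefixSTL.Sat, pdecomp, List.mem_singleton]
    constructor
    · rintro H c rfl u h1 h2
      simp only at h1 h2
      have : u = t := by omega
      subst this; exact H
    · intro H
      have := H (0, 0, h) rfl t
      simp only at this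
      exact this (by omega) (by omega)
  | conj φ₁ φ₂ ih₁ ih₂ =>
    simp only [PrefixSTL.Sat, pdecomp, List.mem_append, ih₁, ih₂]
    constructor
    · rintro ⟨H1, H2⟩ c (hc | hc)
      · exact H1 c hc
      · exact H2 c hc
    · intro H
      exact ⟨fun c hc => H c (Or.inl hc), fun c hc => H c (Or.inr hc)⟩
  | always a b hab φ ih =>
    cases φ with
    | atom h =>
      simp only [PrefixSTL.Sat, pdecomp, List.mem_singleton]
      constructor
      · rintro H c rfl u h1 h2; exact H u h1 h2
      · intro H u h1 h2; exact H (a, b, h) rfl u h1 h2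
    | conj φ₁ φ₂ => exact pdecomp_always_aux a b _ s t ih
    | always a' b' hab' φ' => exact pdecomp_always_aux a b _ s t ih

lemma decomp_always_aux {n : ℕ} (a b : ℕ) (s : ℕ → Fin n → ℝ) (t : ℕ)
    (D : Decomp n) (SatAt : ℕ → Prop)
    (ih : ∀ t, SatAt t ↔ ∃ lam : Fin D.nv → ℕ, D.Feasible lam ∧
      ∀ c ∈ D.conds, c.HoldsAt lam s t) :
    ((∀ t', t + a ≤ t' → t' ≤ t + b → SatAt t') ↔
      ∃ lam : Fin ((b + 1 - a) * D.nv) → ℕ,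
        (Decomp.mk ((b + 1 - a) * D.nv)
          (fun v => D.constr (finProdFinEquiv.symm v).2)
          ((List.finRange (b + 1 - a)).flatMap fun k =>
            D.conds.map fun c =>
              (c.comap fun lam i => lam (finProdFinEquiv (k, i))).shiftBy
                fun _ => a + (k : ℕ))).Feasible lam ∧
        ∀ c ∈ (List.finRange (b + 1 - a)).flatMap (fun k =>
            D.conds.map fun c =>
              (c.comap fun lam i => lam (finProdFinEquiv (k, i))).shiftBy
                fun _ => a + (k : ℕ)),
          c.HoldsAt lam s t) := by
  constructor
  · intro H
    choose lamf hf hc using fun k : Fin (b + 1 - a) =>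
      (ih (t + (a + (k : ℕ)))).mp (H _ (by omega) (by have := k.isLt; omega))
    refine ⟨fun v => lamf (finProdFinEquiv.symm v).1 (finProdFinEquiv.symm v).2, ?_, ?_⟩
    · intro v
      exact hf (finProdFinEquiv.symm v).1 (finProdFinEquiv.symm v).2
    · intro c hcmem
      simp only [List.mem_flatMap, List.mem_map, List.mem_finRange, true_and] at hcmem
      obtain ⟨k, c', hc', rfl⟩ := hcmem
      rw [ProgCond.shiftBy_holdsAt, ProgCond.comap_holdsAt]
      have heq : (fun i => lamf (finProdFinEquiv.symm (finProdFinEquiv (k, i))).1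
          (finProdFinEquiv.symm (finProdFinEquiv (k, i))).2) = lamf k := by
        funext i; simp
      rw [heq]
      exact hc k c' hc'
  · rintro ⟨lam, hf, hc⟩ t' h1 h2
    have hk : t' - (t + a) < b + 1 - a := by omega
    set kf : Fin (b + 1 - a) := ⟨t' - (t + a), hk⟩ with hkf
    refine (ih t').mpr ⟨fun i => lam (finProdFinEquiv (kf, i)), ?_, ?_⟩
    · intro i
      have := hf (finProdFinEquiv (kf, i))
      simpa using this
    · intro c hcmem
      have := hc _ (List.mem_flatMap.2 ⟨kf, List.mem_finRange kf,
        List.mem_map_of_mem hcmem⟩)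
      rw [ProgCond.shiftBy_holdsAt, ProgCond.comap_holdsAt] at this
      have ht : t + (a + (kf : ℕ)) = t' := by simp only [hkf]; omega
      rwa [ht] at this

lemma decomp_sound {n : ℕ} (φ : STL n) (s : ℕ → Fin n → ℝ) (t : ℕ) :
    STL.Sat s φ t ↔ ∃ lam : Fin (decomp φ).nv → ℕ, (decomp φ).Feasible lam ∧
      ∀ c ∈ (decomp φ).conds, c.HoldsAt lam s t := by
  induction φ generalizing t with
  | atom h =>
    simp only [STL.Sat, decomp, List.mem_singleton]
    constructor
    · intro H
      refine ⟨Fin.elim0, fun v => v.elim0, ?_⟩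
      rintro c hc; obtain rfl := List.mem_singleton.mp hc
      rw [ProgCond.holdsAt_mk_true]
      exact ⟨t, by omega, by omega, H⟩
    · rintro ⟨lam, -, hc⟩
      have h' := hc _ (List.mem_singleton_self _)
      rw [ProgCond.holdsAt_mk_true] at h'
      obtain ⟨u, h1, h2, h3⟩ := h'
      have : u = t := by omega
      subst this; exact h3
  | conj φ₁ φ₂ ih₁ ih₂ =>
    simp only [STL.Sat, ih₁, ih₂]
    constructor
    · rintro ⟨⟨l₁, hf₁, hc₁⟩, ⟨l₂, hf₂, hc₂⟩⟩
      refine ⟨fun v => Fin.addCases (motive := fun _ => ℕ) l₁ l₂ v, ?_, ?_⟩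
      · intro v
        induction v using Fin.addCases with
        | left i => simpa [decomp] using hf₁ i
        | right i => simpa [decomp] using hf₂ i
      · intro c hcmem
        simp only [decomp, List.mem_append, List.mem_map] at hcmem
        rcases List.mem_append.mp hcmem with hcmem | hcmem <;> obtain ⟨c', hc', rfl⟩ := List.mem_map.mp hcmem
        · refine (ProgCond.comap_holdsAt _ _ _ _ _).mpr ?_
          simpa [Fin.addCases_left] using hc₁ c' hc'
        · refine (ProgCond.comap_holdsAt _ _ _ _ _).mpr ?_
          simpa [Fin.addCases_right] using hc₂ c' hc'
    · rintro ⟨lam, hf, hc⟩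
      constructor
      · refine ⟨fun i => lam (Fin.castAdd _ i), ?_, ?_⟩
        · intro i; simpa [decomp] using hf (Fin.castAdd _ i)
        · intro c hcmem
          have := hc _ (by
            simp only [decomp, List.mem_append, List.mem_map]
            exact List.mem_append.mpr (Or.inl (List.mem_map.mpr ⟨c, hcmem, rfl⟩)))
          exact (ProgCond.comap_holdsAt _ _ _ _ _).mp this
      · refine ⟨fun i => lam (Fin.natAdd _ i), ?_, ?_⟩
        · intro i; simpa [decomp] using hf (Fin.natAdd _ i)
        · intro c hcmem
          have := hc _ (by
            simp only [decomp, List.mem_append, List.mem_map]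
            exact List.mem_append.mpr (Or.inr (List.mem_map.mpr ⟨c, hcmem, rfl⟩)))
          exact (ProgCond.comap_holdsAt _ _ _ _ _).mp this
  | ev a b hab φ ih =>
    constructor
    · rintro ⟨t', h1, h2, hsat⟩
      obtain ⟨lam0, hf, hc⟩ := (ih t').mp hsat
      refine ⟨Fin.snoc (α := fun _ : Fin ((decomp φ).nv + 1) => ℕ) lam0 (t' - t), ?_, ?_⟩
      · intro v
        induction v using Fin.lastCases with
        | last => simp only [decomp, Fin.snoc_last]; omega
        | cast i => simpa [decomp, Fin.snoc_castSucc] using hf i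
      · intro c hcmem
        simp only [decomp, List.mem_map] at hcmem
        obtain ⟨c', hc', rfl⟩ := List.mem_map.mp hcmem
        refine (ProgCond.shiftBy_holdsAt _ _ _ _ _).mpr ((ProgCond.comap_holdsAt _ _ _ _ _).mpr ?_)
        simp only [Fin.snoc_last, Fin.snoc_castSucc]
        have ht : t + (t' - t) = t' := by omega
        rw [ht]
        exact hc c' hc'
    · rintro ⟨lam, hf, hc⟩
      have hlast := hf (Fin.last _)
      simp only [decomp, Fin.snoc_last] at hlast
      refine ⟨t + lam (Fin.last _), by omega, by omega, (ih _).mpr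
        ⟨fun i => lam i.castSucc, ?_, ?_⟩⟩
      · intro i; simpa [decomp, Fin.snoc_castSucc] using hf i.castSucc
      · intro c hcmem
        have := hc _ (by
          simp only [decomp, List.mem_map]
          exact List.mem_map.mpr ⟨c, hcmem, rfl⟩)
        exact (ProgCond.comap_holdsAt _ _ _ _ _).mp ((ProgCond.shiftBy_holdsAt _ _ _ _ _).mp this)
  | always a b hab φ ih =>
    cases φ with
    | atom h =>
      simp only [STL.Sat, decomp, List.mem_singleton]
      constructor
      · intro H
        refine ⟨Fin.elim0, fun v => v.elim0, ?_⟩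
        rintro c hc; obtain rfl := List.mem_singleton.mp hc
        rw [ProgCond.holdsAt_mk_false]
        exact H
      · rintro ⟨lam, -, hc⟩
        have h' := hc _ (List.mem_singleton_self _)
        rw [ProgCond.holdsAt_mk_false] at h'
        exact h'
    | conj φ₁ φ₂ => exact decomp_always_aux a b s t _ _ ih
    | ev a' b' hab' φ' => exact decomp_always_aux a b s t _ _ ih
    | always a' b' hab' φ' => exact decomp_always_aux a b s t _ _ ih
    | untl ψ' a' b' hab' φ' => exact decomp_always_aux a b s t _ _ ih
  | untl ψ a b hab φ ih =>
    constructor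
    · rintro ⟨t', h1, h2, hsat, hpre⟩
      obtain ⟨lam0, hf, hc⟩ := (ih t').mp hsat
      refine ⟨Fin.snoc (α := fun _ : Fin ((decomp φ).nv + 1) => ℕ) lam0 (t' - t), ?_, ?_⟩
      · intro v
        induction v using Fin.lastCases with
        | last => simp only [decomp, Fin.snoc_last]; omega
        | cast i => simpa [decomp, Fin.snoc_castSucc] using hf i
      · intro c hcmem
        simp only [decomp, List.mem_append, List.mem_map] at hcmem
        rcases List.mem_append.mp hcmem with hcmem | hcmem <;> obtain ⟨c', hc', rfl⟩ := List.mem_map.mp hcmem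
        · refine (ProgCond.shiftBy_holdsAt _ _ _ _ _).mpr ((ProgCond.comap_holdsAt _ _ _ _ _).mpr ?_)
          simp only [Fin.snoc_last, Fin.snoc_castSucc]
          have ht : t + (t' - t) = t' := by omega
          rw [ht]
          exact hc c' hc'
        · refine (ProgCond.holdsAt_mk_false _ _ _ _ _ _).mpr ?_
          simp only [Fin.snoc_last]
          intro u h1' h2'
          have hle := pdecomp_le ψ c' hc'
          set t'' := max t (u - c'.2.1) with ht''
          have h3 : t ≤ t'' := le_max_left _ _
          have h4 : t'' ≤ t' := by omega
          exact (pdecomp_sound ψ s t'').mp (hpre t'' h3 h4) c' hc' u (by omega) (by omega)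
    · rintro ⟨lam, hf, hc⟩
      have hlast := hf (Fin.last _)
      simp only [decomp, Fin.snoc_last] at hlast
      refine ⟨t + lam (Fin.last _), by omega, by omega, (ih _).mpr
        ⟨fun i => lam i.castSucc, ?_, ?_⟩, ?_⟩
      · intro i; simpa [decomp, Fin.snoc_castSucc] using hf i.castSucc
      · intro c hcmem
        have := hc _ (by
          simp only [decomp, List.mem_append, List.mem_map]
          exact List.mem_append.mpr (Or.inl (List.mem_map.mpr ⟨c, hcmem, rfl⟩)))
        exact (ProgCond.comap_holdsAt _ _ _ _ _).mp ((ProgCond.shiftBy_holdsAt _ _ _ _ _).mp this)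
      · intro t'' h3 h4
        rw [pdecomp_sound]
        intro c' hc' u hu1 hu2
        have := hc _ (by
          simp only [decomp, List.mem_append, List.mem_map]
          exact List.mem_append.mpr (Or.inr (List.mem_map.mpr ⟨c', hc', rfl⟩)))
        replace this := (ProgCond.holdsAt_mk_false _ _ _ _ _ _).mp this
        exact this u (by omega) (by omega)

/-- **Soundness of the progress-based decomposition (Lemma 1).**
For every signal `s : ℕ → ℝ^n`, `s ⊨ φ` iff there is a feasible assignment of the
time variables under which every progress condition of the decomposition holds on `s`.
In particular, when the variable set is empty, `s ⊨ φ` iff every progress condition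
holds on `s`. -/
theorem progress_decomposition_sound {n : ℕ} (φ : STL n) (s : ℕ → Fin n → ℝ) :
    (STL.Sat s φ 0 ↔
      ∃ lam : Fin (decomp φ).nv → ℕ, (decomp φ).Feasible lam ∧
        ∀ c ∈ (decomp φ).conds, c.Holds lam s) ∧
    ((decomp φ).nv = 0 →
      (STL.Sat s φ 0 ↔
        ∀ lam : Fin (decomp φ).nv → ℕ, ∀ c ∈ (decomp φ).conds, c.Holds lam s)) := by

  constructor
  · rw [decomp_sound φ s 0]
    constructor
    · rintro ⟨lam, hf, hc⟩
      exact ⟨lam, hf, fun c hcmem => (ProgCond.holdsAt_zero c lam s).mp (hc c hcmem)⟩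
    · rintro ⟨lam, hf, hc⟩
      exact ⟨lam, hf, fun c hcmem => (ProgCond.holdsAt_zero c lam s).mpr (hc c hcmem)⟩
  · intro h0
    rw [decomp_sound φ s 0]
    constructor
    · rintro ⟨lam, -, hc⟩ lam' c hcmem
      have hll : lam' = lam := funext fun v => (Fin.cast h0 v).elim0
      rw [hll]
      exact (ProgCond.holdsAt_zero c lam s).mp (hc c hcmem)
    · intro H
      refine ⟨fun _ => 0, fun v => (Fin.cast h0 v).elim0, ?_⟩
      intro c hcmem
      exact (ProgCond.holdsAt_zero c _ s).mpr (H _ c hcmem)
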